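/- Let W be an m×n real matrix, X an n×k real matrix, and let R be any n×n matrix with RᵀR = XXᵀ (e.g., the upper-triangular factor from a QR decomposition of Xᵀ when n ≤ k). Then for every m×n matrix W', ‖(W − W')X‖_F = ‖(W − W')Rᵀ‖_F. Consequently, a rank-r minimizer of ‖(W−W')X‖_F is given by W' = U_r U_rᵀ W, where U_r consists of the first r left singular vectors of WRᵀ. -/

import Mathlib

open Matrix BigOperators

noncomputable def frobNorm {α β : Type*} [Fintype α] [Fintype β]
    (A : Matrix α β ℝ) : ℝ :=
  Real.sqrt (∑ i, ∑ j, (A i j) ^ 2)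
lemma frob_eq_trace {m n : ℕ} (A : Matrix (Fin m) (Fin n) ℝ) :
    frobNorm A = Real.sqrt ((A * Aᵀ).trace) := by
  unfold frobNorm
  congr 1
  simp [Matrix.trace, Matrix.mul_apply, Matrix.diag, sq]

lemma trace_self_nonneg {m n : ℕ} (A : Matrix (Fin m) (Fin n) ℝ) :
    0 ≤ (A * Aᵀ).trace := by
  simp only [Matrix.trace, Matrix.diag, Matrix.mul_apply, Matrix.transpose_apply]
  exact Finset.sum_nonneg fun i _ => Finset.sum_nonneg fun j _ => mul_self_nonneg _

lemma sum_mul_le_top {m r : ℕ} (q a : Fin m → ℝ)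
    (hq0 : ∀ i, 0 ≤ q i) (hq1 : ∀ i, q i ≤ 1) (hqs : ∑ i : Fin m, q i ≤ (r : ℝ))
    (ha : Antitone a) (ha0 : ∀ i, 0 ≤ a i) :
    ∑ i : Fin m, q i * a i ≤ ∑ i : Fin m, (if (i : ℕ) < r then a i else 0) := by
  by_cases hmr : m ≤ r
  · have hall : ∀ i : Fin m, (i : ℕ) < r := fun i => lt_of_lt_of_le i.isLt hmr
    have h1 : ∑ i : Fin m, q i * a i ≤ ∑ i : Fin m, a i := by
      refine Finset.sum_le_sum fun i _ => ?_
      have := mul_le_mul_of_nonneg_right (hq1 i) (ha0 i)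
      linarith
    have h2 : ∑ i : Fin m, (if (i : ℕ) < r then a i else 0) = ∑ i : Fin m, a i := by
      refine Finset.sum_congr rfl fun i _ => ?_
      rw [if_pos (hall i)]
    linarith
  · push_neg at hmr
    have hi0 : r < m := hmr
    set t := a ⟨r, hi0⟩ with ht
    have ht0 : 0 ≤ t := ha0 _
    have key : ∀ i : Fin m, q i * (a i - t) ≤ (if (i : ℕ) < r then a i - t else 0) := by
      intro i
      by_cases h : (i : ℕ) < r
      · rw [if_pos h]
        have hle : i ≤ (⟨r, hi0⟩ : Fin m) := by rw [Fin.le_def]; exact le_of_lt h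
        have : t ≤ a i := ha hle
        have := mul_le_mul_of_nonneg_right (hq1 i) (by linarith : (0:ℝ) ≤ a i - t)
        linarith
      · rw [if_neg h]
        have hge : (⟨r, hi0⟩ : Fin m) ≤ i := by rw [Fin.le_def]; simpa using not_lt.mp h
        have : a i ≤ t := ha hge
        exact mul_nonpos_of_nonneg_of_nonpos (hq0 i) (by linarith)
    have hcard : (Finset.univ.filter (fun i : Fin m => (i : ℕ) < r)).card = r := by
      have : (Finset.univ.filter (fun i : Fin m => (i : ℕ) < r)) =
          Finset.map ⟨Fin.castLE (le_of_lt hi0), Fin.castLE_injective _⟩ Finset.univ := by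
        ext i
        simp only [Finset.mem_filter, Finset.mem_univ, true_and, Finset.mem_map,
          Function.Embedding.coeFn_mk]
        constructor
        · intro h
          exact ⟨⟨(i : ℕ), h⟩, by ext; simp⟩
        · rintro ⟨j, rfl⟩; exact j.isLt
      rw [this, Finset.card_map, Finset.card_univ, Fintype.card_fin]
    have hsum_t : ∑ i : Fin m, (if (i : ℕ) < r then t else 0) = r * t := by
      rw [← Finset.sum_filter, Finset.sum_const, hcard, nsmul_eq_mul]
    have step1 : ∑ i : Fin m, q i * a i
        = (∑ i : Fin m, q i * (a i - t)) + t * ∑ i : Fin m, q i := by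
      rw [Finset.mul_sum, ← Finset.sum_add_distrib]
      refine Finset.sum_congr rfl fun i _ => by ring
    have step2 : (∑ i : Fin m, q i * (a i - t))
        ≤ ∑ i : Fin m, (if (i : ℕ) < r then a i - t else 0) :=
      Finset.sum_le_sum fun i _ => key i
    have step3 : t * ∑ i : Fin m, q i ≤ t * r := mul_le_mul_of_nonneg_left hqs ht0
    have step4 : ∑ i : Fin m, (if (i : ℕ) < r then a i - t else 0)
        = (∑ i : Fin m, (if (i : ℕ) < r then a i else 0)) - r * t := by
      rw [← hsum_t, ← Finset.sum_sub_distrib]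
      refine Finset.sum_congr rfl fun i _ => ?_
      by_cases h : (i : ℕ) < r <;> simp [h]
    rw [step1]
    calc (∑ i : Fin m, q i * (a i - t)) + t * ∑ i : Fin m, q i
        ≤ ((∑ i : Fin m, (if (i : ℕ) < r then a i else 0)) - r * t) + t * r := by
          rw [← step4]; exact add_le_add step2 step3
      _ = ∑ i : Fin m, (if (i : ℕ) < r then a i else 0) := by ring



section
variable {m : ℕ}

-- diag entries of symmetric idempotent are in [0,1]
lemma diag_mem_unit {Q : Matrix (Fin m) (Fin m) ℝ} (hQs : Qᵀ = Q) (hQ2 : Q * Q = Q)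
    (i : Fin m) : 0 ≤ Q i i ∧ Q i i ≤ 1 := by
  have hdiag : Q i i = ∑ j, (Q i j) ^ 2 := by
    conv_lhs => rw [← hQ2]
    rw [Matrix.mul_apply]
    refine Finset.sum_congr rfl fun j _ => ?_
    have : Q j i = Q i j := by
      nth_rewrite 1 [← hQs]; rw [Matrix.transpose_apply]
    rw [this]; ring
  have h0 : 0 ≤ Q i i := by
    rw [hdiag]; exact Finset.sum_nonneg fun j _ => sq_nonneg _
  have hsq : (Q i i) ^ 2 ≤ Q i i := by
    conv_rhs => rw [hdiag]
    exact Finset.single_le_sum (fun j _ => sq_nonneg (Q i j)) (Finset.mem_univ i)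
  exact ⟨h0, by nlinarith⟩

-- key: trace of P * (U D Uᵀ) bounded by top-r sum
lemma trace_proj_svd_le {r : ℕ} (P U : Matrix (Fin m) (Fin m) ℝ) (s : Fin m → ℝ)
    (hPs : Pᵀ = P) (hP2 : P * P = P) (htr : P.trace ≤ (r : ℝ))
    (hU : Uᵀ * U = 1) (hmono : Antitone s) (hpos : ∀ i, 0 ≤ s i) :
    (P * (U * Matrix.diagonal (fun i => (s i) ^ 2) * Uᵀ)).trace
      ≤ ∑ i : Fin m, (if (i : ℕ) < r then (s i) ^ 2 else 0) := by
  have hUU : U * Uᵀ = 1 := mul_eq_one_comm.mp hU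
  set Q := Uᵀ * P * U with hQ
  have hQs : Qᵀ = Q := by
    rw [hQ]; simp [Matrix.transpose_mul, hPs, Matrix.mul_assoc]
  have hQ2 : Q * Q = Q := by
    rw [hQ]
    calc Uᵀ * P * U * (Uᵀ * P * U) = Uᵀ * (P * (U * Uᵀ) * P) * U := by
          simp only [Matrix.mul_assoc]
      _ = Uᵀ * P * U := by rw [hUU, Matrix.mul_one, hP2, Matrix.mul_assoc]
  have hQtr : Q.trace = P.trace := by
    rw [hQ, Matrix.trace_mul_cycle, hUU, Matrix.one_mul]
  have htrace_eq : (P * (U * Matrix.diagonal (fun i => (s i) ^ 2) * Uᵀ)).trace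
      = ∑ i : Fin m, Q i i * (s i) ^ 2 := by
    have h1 : P * (U * Matrix.diagonal (fun i => (s i) ^ 2) * Uᵀ)
        = (P * U * Matrix.diagonal (fun i => (s i) ^ 2)) * Uᵀ := by
      simp only [Matrix.mul_assoc]
    rw [h1, Matrix.trace_mul_comm, ← Matrix.mul_assoc, ← Matrix.mul_assoc, ← hQ]
    simp only [Matrix.trace, Matrix.diag_apply, Matrix.mul_apply, Matrix.diagonal_apply]
    refine Finset.sum_congr rfl fun i _ => ?_
    rw [Finset.sum_eq_single i] <;> simp_all
  rw [htrace_eq]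
  refine sum_mul_le_top (fun i => Q i i) (fun i => (s i) ^ 2)
    (fun i => (diag_mem_unit hQs hQ2 i).1) (fun i => (diag_mem_unit hQs hQ2 i).2)
    (by
      have he : Q.trace = ∑ i : Fin m, Q i i := by simp [Matrix.trace, Matrix.diag]
      rw [← he, hQtr]; exact htr)
    (fun i j hij => pow_le_pow_left₀ (hpos j) (hmono hij) 2)
    (fun i => sq_nonneg _)

-- trace of ((1-P)A)((1-P)A)ᵀ
lemma trace_one_sub_proj {n : ℕ} (P : Matrix (Fin m) (Fin m) ℝ)
    (A : Matrix (Fin m) (Fin n) ℝ) (hPs : Pᵀ = P) (hP2 : P * P = P) :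
    (((1 - P) * A) * ((1 - P) * A)ᵀ).trace = (A * Aᵀ).trace - (P * (A * Aᵀ)).trace := by
  have hQs : (1 - P)ᵀ = 1 - P := by simp [Matrix.transpose_sub, hPs]
  have expand : ((1 - P) * A) * ((1 - P) * A)ᵀ = (1 - P) * (A * Aᵀ) * (1 - P) := by
    rw [Matrix.transpose_mul, hQs]
    simp only [Matrix.mul_assoc]
  rw [expand]
  have : (1 - P) * (A * Aᵀ) * (1 - P)
      = A * Aᵀ - P * (A * Aᵀ) - (A * Aᵀ) * P + P * ((A * Aᵀ) * P) := by
    simp only [Matrix.sub_mul, Matrix.mul_sub, Matrix.one_mul, Matrix.mul_one,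
      Matrix.mul_assoc]
    abel
  rw [this]
  simp only [Matrix.trace_add, Matrix.trace_sub]
  have h1 : ((A * Aᵀ) * P).trace = (P * (A * Aᵀ)).trace := Matrix.trace_mul_comm _ _
  have h2 : (P * ((A * Aᵀ) * P)).trace = (P * (A * Aᵀ)).trace := by
    rw [← Matrix.mul_assoc, Matrix.trace_mul_comm, ← Matrix.mul_assoc, hP2]
  rw [h1, h2]; ring

end

lemma exists_proj {m n r : ℕ} (B : Matrix (Fin m) (Fin n) ℝ) (hB : B.rank ≤ r) :
    ∃ P : Matrix (Fin m) (Fin m) ℝ,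
      Pᵀ = P ∧ P * P = P ∧ P * B = B ∧ P.trace ≤ (r : ℝ) := by
  classical
  set e : (Fin m → ℝ) ≃ₗ[ℝ] EuclideanSpace ℝ (Fin m) :=
    (WithLp.linearEquiv 2 ℝ (Fin m → ℝ)).symm with he
  set V : Submodule ℝ (EuclideanSpace ℝ (Fin m)) :=
    Submodule.map (e : (Fin m → ℝ) →ₗ[ℝ] EuclideanSpace ℝ (Fin m)) (Submodule.span ℝ (Set.range Bᵀ)) with hV
  have hdim : Module.finrank ℝ V ≤ r := by
    rw [hV, LinearEquiv.finrank_map_eq]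
    rw [Matrix.rank_eq_finrank_span_cols] at hB
    exact hB
  set d := Module.finrank ℝ V with hd
  set b : OrthonormalBasis (Fin d) ℝ V := stdOrthonormalBasis ℝ V with hb
  set C : Matrix (Fin m) (Fin d) ℝ :=
    Matrix.of (fun i j => ((b j : EuclideanSpace ℝ (Fin m)) i)) with hC
  have hinner : ∀ x y : EuclideanSpace ℝ (Fin m),
      (inner ℝ x y : ℝ) = ∑ i : Fin m, x i * y i := by
    intro x y
    rw [PiLp.inner_apply]
    simp [RCLike.inner_apply, mul_comm]
  have hCtC : Cᵀ * C = 1 := by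
    ext j j'
    rw [Matrix.mul_apply]
    have := (orthonormal_iff_ite.mp b.orthonormal) j j'
    rw [Submodule.coe_inner, hinner] at this
    simp only [Matrix.transpose_apply, hC, Matrix.of_apply]
    rw [this]
    by_cases h : j = j' <;> simp [h, Matrix.one_apply]
  refine ⟨C * Cᵀ, ?_, ?_, ?_, ?_⟩
  · rw [Matrix.transpose_mul, Matrix.transpose_transpose]
  · calc C * Cᵀ * (C * Cᵀ) = C * (Cᵀ * C) * Cᵀ := by simp only [Matrix.mul_assoc]
      _ = C * Cᵀ := by rw [hCtC, Matrix.mul_one]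
  · -- P * B = B
    ext i l
    -- the l-th column of B, as an element of V
    have hmem : e (Bᵀ l) ∈ V := by
      rw [hV]
      exact Submodule.mem_map_of_mem (Submodule.subset_span (Set.mem_range_self l))
    set vv : V := ⟨e (Bᵀ l), hmem⟩ with hvv
    have hvvE : ∀ t, (vv : EuclideanSpace ℝ (Fin m)) t = B t l := by
      intro t
      show (e (Bᵀ l)) t = B t l
      rw [he]
      simp only [WithLp.linearEquiv, LinearEquiv.symm_symm, LinearEquiv.coe_symm_mk]
      rfl
    have hw : ∀ j, b.repr vv j = ∑ t, C t j * B t l := by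
      intro j
      rw [b.repr_apply_apply, Submodule.coe_inner, hinner]
      refine Finset.sum_congr rfl fun t _ => ?_
      rw [hvvE]
      rfl
    have hexp := b.sum_repr vv
    have hexpE : ∀ i, B i l = ∑ j, b.repr vv j * C i j := by
      intro i
      have h1 : ((∑ j, b.repr vv j • b j : V) : EuclideanSpace ℝ (Fin m)) i
          = (vv : EuclideanSpace ℝ (Fin m)) i := by rw [hexp]
      rw [hvvE] at h1
      rw [← h1, Submodule.coe_sum]
      rw [show ((∑ j, ((b.repr vv j • b j : V) : EuclideanSpace ℝ (Fin m))) i)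
          = ∑ j, ((b.repr vv j • b j : V) : EuclideanSpace ℝ (Fin m)) i from by
        rw [WithLp.ofLp_sum, Finset.sum_apply]]
      refine Finset.sum_congr rfl fun j _ => ?_
      rw [Submodule.coe_smul, PiLp.smul_apply, smul_eq_mul]
      rfl
    rw [Matrix.mul_apply]
    have : ∀ j, (Cᵀ * B) j l = b.repr vv j := by
      intro j
      rw [Matrix.mul_apply, hw j]
      rfl
    calc ∑ j, (C * Cᵀ) i j * B j l = (C * (Cᵀ * B)) i l := by
          rw [← Matrix.mul_assoc, Matrix.mul_apply]
      _ = ∑ j, C i j * (Cᵀ * B) j l := Matrix.mul_apply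
      _ = B i l := by
          rw [hexpE i]
          refine Finset.sum_congr rfl fun j _ => ?_
          rw [this j]; ring
  · rw [Matrix.trace_mul_comm, hCtC, Matrix.trace_one]
    simpa using (Nat.cast_le (α := ℝ)).mpr hdim

lemma trace_proj_nonneg {m n : ℕ} (P : Matrix (Fin m) (Fin m) ℝ)
    (C : Matrix (Fin m) (Fin n) ℝ) (hPs : Pᵀ = P) (hP2 : P * P = P) :
    0 ≤ (P * (C * Cᵀ)).trace := by
  have h1 : (P * C) * (P * C)ᵀ = P * (C * Cᵀ) * P := by
    rw [Matrix.transpose_mul, hPs]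
    simp only [Matrix.mul_assoc]
  have h2 : (P * (C * Cᵀ) * P).trace = (P * (C * Cᵀ)).trace := by
    rw [Matrix.trace_mul_cycle, ← Matrix.mul_assoc, hP2, Matrix.mul_assoc]
  rw [← h2, ← h1]
  exact trace_self_nonneg _

/-- If `RᵀR = XXᵀ` then `‖(W−W')X‖_F = ‖(W−W')Rᵀ‖_F` for every `W'`,
and `W' = U_r U_rᵀ W` (with `U_r` the first `r` left singular vectors of `WRᵀ`)
is a rank-`≤ r` minimizer of `‖(W−W')X‖_F`. -/
theorem stmt1 {m n k : ℕ} (r : ℕ) (hr : r ≤ m)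
    (W : Matrix (Fin m) (Fin n) ℝ) (X : Matrix (Fin n) (Fin k) ℝ)
    (R : Matrix (Fin n) (Fin n) ℝ) (hR : Rᵀ * R = X * Xᵀ)
    (U : Matrix (Fin m) (Fin m) ℝ) (s : Fin m → ℝ)
    (hU : Uᵀ * U = 1)
    (hsvd : (W * Rᵀ) * (W * Rᵀ)ᵀ = U * Matrix.diagonal (fun i => (s i) ^ 2) * Uᵀ)
    (hmono : Antitone s) (hpos : ∀ i, 0 ≤ s i)
    (Ur : Matrix (Fin m) (Fin r) ℝ)
    (hUr : Ur = U.submatrix id (Fin.castLE hr)) :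
    (∀ W' : Matrix (Fin m) (Fin n) ℝ,
        frobNorm ((W - W') * X) = frobNorm ((W - W') * Rᵀ)) ∧
    (Ur * Urᵀ * W).rank ≤ r ∧
      ∀ W' : Matrix (Fin m) (Fin n) ℝ, W'.rank ≤ r →
        frobNorm ((W - Ur * Urᵀ * W) * X) ≤ frobNorm ((W - W') * X) := by
  classical
  -- Part 1
  have part1 : ∀ A : Matrix (Fin m) (Fin n) ℝ,
      frobNorm (A * X) = frobNorm (A * Rᵀ) := by
    intro A
    rw [frob_eq_trace, frob_eq_trace]
    congr 1
    have : (A * X) * (A * X)ᵀ = (A * Rᵀ) * (A * Rᵀ)ᵀ := by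
      rw [Matrix.transpose_mul, Matrix.transpose_mul, Matrix.transpose_transpose]
      calc A * X * (Xᵀ * Aᵀ) = A * (X * Xᵀ) * Aᵀ := by simp only [Matrix.mul_assoc]
        _ = A * (Rᵀ * R) * Aᵀ := by rw [hR]
        _ = A * Rᵀ * (R * Aᵀ) := by simp only [Matrix.mul_assoc]
    rw [this]
  refine ⟨fun W' => part1 (W - W'), ?_, ?_⟩
  · -- rank bound
    calc (Ur * Urᵀ * W).rank = (Ur * (Urᵀ * W)).rank := by rw [Matrix.mul_assoc]
      _ ≤ Ur.rank := Matrix.rank_mul_le_left _ _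
      _ ≤ Fintype.card (Fin r) := Matrix.rank_le_card_width _
      _ = r := Fintype.card_fin r
  · -- main minimization claim
    intro W' hW'
    set A := W * Rᵀ with hA
    set M := A * Aᵀ with hM
    set E : Matrix (Fin m) (Fin r) ℝ :=
      Matrix.of (fun t j => if t = Fin.castLE hr j then 1 else 0) with hE
    have hUrE : Ur = U * E := by
      rw [hUr]
      ext i j
      rw [Matrix.mul_apply]
      rw [Finset.sum_eq_single (Fin.castLE hr j)]
      · simp [hE]
      · intro t _ ht; simp [hE, ht]
      · simp
    have hEtE : Eᵀ * E = 1 := by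
      ext j j'
      rw [Matrix.mul_apply]
      by_cases h : j = j'
      · subst h
        rw [Finset.sum_eq_single (Fin.castLE hr j)]
        · simp [hE]
        · intro t _ ht; simp [hE, ht]
        · simp
      · rw [Finset.sum_eq_zero, Matrix.one_apply_ne h]
        intro t _
        simp only [Matrix.transpose_apply, hE, Matrix.of_apply]
        by_cases h1 : t = Fin.castLE hr j
        · have h2 : t ≠ Fin.castLE hr j' := by
            intro h2
            exact h (Fin.castLE_injective hr (h1 ▸ h2))
          simp [h1, h2, h]
        · simp [h1]
    have hEEt_diag : ∀ i : Fin m,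
        (E * Eᵀ) i i = if (i : ℕ) < r then (1:ℝ) else 0 := by
      intro i
      rw [Matrix.mul_apply]
      by_cases h : (i : ℕ) < r
      · rw [if_pos h, Finset.sum_eq_single (⟨(i:ℕ), h⟩ : Fin r)]
        · have : i = Fin.castLE hr ⟨(i:ℕ), h⟩ := by ext; simp
          simp [hE, ← this]
        · intro t _ ht
          have : i ≠ Fin.castLE hr t := by
            intro hc
            apply ht; ext
            simp [hc]
          simp [hE, this]
        · simp
      · rw [if_neg h, Finset.sum_eq_zero]
        intro t _
        have : i ≠ Fin.castLE hr t := by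
          intro hc
          apply h
          rw [hc]
          exact t.isLt
        simp [hE, this]
    have hUrtUr : Urᵀ * Ur = 1 := by
      have step : Urᵀ * Ur = Eᵀ * E := by
        rw [hUrE, Matrix.transpose_mul]
        calc Eᵀ * Uᵀ * (U * E) = Eᵀ * (Uᵀ * U) * E := by simp only [Matrix.mul_assoc]
          _ = Eᵀ * E := by rw [hU, Matrix.mul_one]
      rw [step, hEtE]
    set P₀ := Ur * Urᵀ with hP₀
    have hP₀s : P₀ᵀ = P₀ := by
      rw [hP₀, Matrix.transpose_mul, Matrix.transpose_transpose]
    have hP₀2 : P₀ * P₀ = P₀ := by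
      rw [hP₀]
      calc Ur * Urᵀ * (Ur * Urᵀ) = Ur * (Urᵀ * Ur) * Urᵀ := by simp only [Matrix.mul_assoc]
        _ = Ur * Urᵀ := by rw [hUrtUr, Matrix.mul_one]
    set T := ∑ i : Fin m, (if (i : ℕ) < r then (s i) ^ 2 else 0) with hT
    -- exact trace of P₀ * M
    have htrP₀M : (P₀ * M).trace = T := by
      have hMsvd : M = U * Matrix.diagonal (fun i => (s i) ^ 2) * Uᵀ := hsvd
      have hUUt : U * Uᵀ = 1 := mul_eq_one_comm.mp hU
      rw [hMsvd, hP₀, hUrE, Matrix.transpose_mul]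
      have h1 : U * E * (Eᵀ * Uᵀ) * (U * Matrix.diagonal (fun i => (s i) ^ 2) * Uᵀ)
          = U * (E * (Eᵀ * Matrix.diagonal (fun i => (s i) ^ 2))) * Uᵀ := by
        calc U * E * (Eᵀ * Uᵀ) * (U * Matrix.diagonal (fun i => (s i) ^ 2) * Uᵀ)
            = U * (E * (Eᵀ * ((Uᵀ * U) * Matrix.diagonal (fun i => (s i) ^ 2)))) * Uᵀ := by
              simp only [Matrix.mul_assoc]
          _ = U * (E * (Eᵀ * Matrix.diagonal (fun i => (s i) ^ 2))) * Uᵀ := by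
              rw [hU, Matrix.one_mul]
      rw [h1, Matrix.trace_mul_cycle, hU, Matrix.one_mul, ← Matrix.mul_assoc]
      have h2 : ∀ i : Fin m, (E * Eᵀ * Matrix.diagonal (fun i => (s i) ^ 2)) i i
          = (E * Eᵀ) i i * (s i) ^ 2 := by
        intro i
        rw [Matrix.mul_apply]
        rw [Finset.sum_eq_single i] <;> simp_all [Matrix.diagonal_apply]
      rw [Matrix.trace]
      simp only [Matrix.diag_apply]
      rw [hT]
      refine Finset.sum_congr rfl fun i _ => ?_
      rw [h2 i, hEEt_diag i]
      by_cases h : (i : ℕ) < r <;> simp [h]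
    -- LHS trace value
    have hLHS : ((W - Ur * Urᵀ * W) * Rᵀ) = (1 - P₀) * A := by
      rw [hA, hP₀]
      rw [Matrix.sub_mul, Matrix.sub_mul, Matrix.one_mul, Matrix.mul_assoc]
    have hLHStr : (((W - Ur * Urᵀ * W) * Rᵀ) * ((W - Ur * Urᵀ * W) * Rᵀ)ᵀ).trace
        = M.trace - T := by
      rw [hLHS, trace_one_sub_proj P₀ A hP₀s hP₀2, ← hM, htrP₀M]
    -- RHS lower bound
    set B := W' * Rᵀ with hB
    have hrkB : B.rank ≤ r := le_trans (Matrix.rank_mul_le_left _ _) hW'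
    obtain ⟨P, hPs, hP2, hPB, hPtr⟩ := exists_proj B hrkB
    have hWWR : (W - W') * Rᵀ = A - B := by
      rw [hA, hB, Matrix.sub_mul]
    have hsplit : (1 - P) * (A - B) = (1 - P) * A := by
      rw [Matrix.mul_sub]
      have hz : (1 - P) * B = 0 := by
        rw [Matrix.sub_mul, Matrix.one_mul, hPB, sub_self]
      rw [hz, sub_zero]
    have hRHS1 : (((1 - P) * A) * ((1 - P) * A)ᵀ).trace
        ≤ ((A - B) * (A - B)ᵀ).trace := by
      rw [← hsplit, trace_one_sub_proj P (A - B) hPs hP2]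
      have := trace_proj_nonneg P (A - B) hPs hP2
      linarith
    have hRHS2 : M.trace - T ≤ (((1 - P) * A) * ((1 - P) * A)ᵀ).trace := by
      rw [trace_one_sub_proj P A hPs hP2]
      have hMtr : M.trace = (A * Aᵀ).trace := by rw [hM]
      have hsvd' : A * Aᵀ = U * Matrix.diagonal (fun i => (s i) ^ 2) * Uᵀ := hsvd
      have hle : (P * (A * Aᵀ)).trace ≤ T := by
        rw [hsvd', hT]
        exact trace_proj_svd_le P U s hPs hP2 hPtr hU hmono hpos
      linarith
    -- conclude
    rw [part1 (W - Ur * Urᵀ * W), part1 (W - W')]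
    rw [frob_eq_trace, frob_eq_trace]
    apply Real.sqrt_le_sqrt
    rw [hLHStr, hWWR]
    linarith
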